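/- Combined impossibility for d-regular graphs: let d be constant, c > 1, f(n) = o(log log n). For all large n and every algorithm A : [n^c] × ({0,1}^{f(n)})^{d+1} → {0,1}^{f(n)}, there exist n distinct identifiers on which all specific algorithms coincide; hence on any d-regular n-node graph with those identifiers, starting from a constant configuration, the synchronous execution stays constant forever. -/

import Mathlib

open Filter Asymptotics

/-- Combined impossibility for d-regular graphs: for constant d, c > 1 and
f(n) = o(log log n), for all large n every algorithm A admits n distinct
identifiers with identical specific algorithms; hence on any d-regular n-node
graph whose (injective) identifiers are taken among those, the synchronous
execution started from a constant configuration stays constant forever. -/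
theorem regular_impossibility (d : ℕ) (c : ℝ) (hc : 1 < c) (f : ℕ → ℕ)
    (hf : (fun n => (f n : ℝ)) =o[atTop] (fun n => Real.log (Real.log n))) :
    ∀ᶠ n : ℕ in atTop,
      ∀ A : Fin ⌈(n : ℝ) ^ c⌉₊ →
          (Fin (d + 1) → (Fin (f n) → Bool)) → (Fin (f n) → Bool),
        ∃ S : Finset (Fin ⌈(n : ℝ) ^ c⌉₊),
          S.card = n ∧ (∀ i ∈ S, ∀ j ∈ S, A i = A j) ∧
          ∀ (V : Type) (_ : Fintype V) (_ : DecidableEq V)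
            (G : SimpleGraph V) (_ : DecidableRel G.Adj),
            Fintype.card V = n → (∀ v : V, G.degree v = d) →
            ∀ id : V → Fin ⌈(n : ℝ) ^ c⌉₊, Function.Injective id →
              (∀ v, id v ∈ S) →
              ∀ nb : V → Fin d → V, (∀ v j, G.Adj v (nb v j)) →
                ∀ s₀ : Fin (f n) → Bool, ∀ t : ℕ,
                  ∃ s, ∀ v,
                    ((fun γ v => A (id v)
                        (Fin.cons (γ v) (fun j => γ (nb v j))))^[t]
                      (fun _ => s₀)) v = s := by
  have hlog2 : (0:ℝ) < Real.log 2 := Real.log_pos (by norm_num)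
  set K : ℕ := d + 2 with hK
  have hKpos : (0:ℝ) < (K:ℝ) := by positivity
  have hc1 : (0:ℝ) < c - 1 := by linarith
  have hε : (0:ℝ) < 1 / (2 * K * Real.log 2) := by positivity
  have htend : Tendsto (fun n : ℕ => Real.log n) atTop atTop :=
    Real.tendsto_log_atTop.comp tendsto_natCast_atTop_atTop
  filter_upwards [hf.def hε,
    htend.eventually_ge_atTop (max 1 ((Real.log 2 / (c - 1)) ^ 2)),
    eventually_ge_atTop 2] with n hfn hln hn2
  set L := Real.log n with hLdef
  have hL1 : 1 ≤ L := le_trans (le_max_left _ _) hln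
  have hL2 : (Real.log 2 / (c - 1)) ^ 2 ≤ L := le_trans (le_max_right _ _) hln
  have hL0 : (0:ℝ) ≤ L := by linarith
  have hlogL0 : 0 ≤ Real.log L := Real.log_nonneg hL1
  have hnpos : (0:ℝ) < n := by positivity
  -- from littleO : f n ≤ ε * log L
  have hfn' : (f n : ℝ) ≤ (1 / (2 * K * Real.log 2)) * Real.log L := by
    have h := hfn
    simp only [Real.norm_eq_abs] at h
    rw [abs_of_nonneg (by positivity : (0:ℝ) ≤ (f n : ℝ)),
      abs_of_nonneg hlogL0] at h
    exact h
  have step1 : (K : ℝ) * (f n) * Real.log 2 ≤ Real.log L / 2 := by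
    have h' : (f n : ℝ) * (2 * K * Real.log 2) ≤ Real.log L := by
      rw [← le_div_iff₀ (by positivity)]
      rw [one_div_mul_eq_div] at hfn'
      exact hfn'
    nlinarith
  -- step2 : 2 ^ (K * f n) ≤ sqrt L
  have hsqrtpos : 0 < Real.sqrt L := Real.sqrt_pos.mpr (by linarith)
  have step2 : (2:ℝ) ^ (K * f n) ≤ Real.sqrt L := by
    rw [← Real.log_le_log_iff (by positivity) hsqrtpos, Real.log_pow,
      Real.log_sqrt hL0, Nat.cast_mul]
    exact step1
  -- step3 : m * log 2 ≤ (c-1) * L where m = 2 ^ (K * f n)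
  have hsqrt2 : Real.log 2 / (c - 1) ≤ Real.sqrt L :=
    (Real.le_sqrt (by positivity) hL0).mpr hL2
  have hmul : Real.sqrt L * Real.sqrt L = L := Real.mul_self_sqrt hL0
  have step3 : ((2:ℝ) ^ (K * f n)) * Real.log 2 ≤ (c - 1) * L := by
    have h1 : Real.log 2 ≤ (c - 1) * Real.sqrt L := by
      rw [div_le_iff₀ hc1] at hsqrt2; linarith
    nlinarith [pow_pos (by norm_num : (0:ℝ) < 2) (K * f n)]
  -- step4 : 2 ^ (2 ^ (K * f n)) ≤ n ^ (c - 1)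
  have step4 : (2:ℝ) ^ (2 ^ (K * f n)) ≤ (n:ℝ) ^ (c - 1) := by
    rw [← Real.log_le_log_iff (by positivity) (Real.rpow_pos_of_pos hnpos _),
      Real.log_pow, Real.log_rpow hnpos]
    push_cast
    exact step3
  -- exponent comparison in ℕ
  have hexp : f n * 2 ^ ((d + 1) * f n) ≤ 2 ^ (K * f n) := by
    calc f n * 2 ^ ((d + 1) * f n) ≤ 2 ^ (f n) * 2 ^ ((d + 1) * f n) :=
          Nat.mul_le_mul_right _ (Nat.lt_two_pow_self (n := f n)).le
      _ = 2 ^ (K * f n) := by rw [← pow_add, hK]; ring_nf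
  have hreal : (n:ℝ) * (2:ℝ) ^ (f n * 2 ^ ((d + 1) * f n)) ≤ (n:ℝ) ^ c := by
    have h1 : (2:ℝ) ^ (f n * 2 ^ ((d + 1) * f n)) ≤ (2:ℝ) ^ (2 ^ (K * f n)) :=
      pow_le_pow_right₀ one_le_two hexp
    have h2 : (n:ℝ) ^ c = (n:ℝ) * (n:ℝ) ^ (c - 1) := by
      have h := Real.rpow_add hnpos 1 (c - 1)
      rw [Real.rpow_one, show (1:ℝ) + (c - 1) = c by ring] at h
      exact h
    rw [h2]
    have := mul_le_mul_of_nonneg_left (le_trans h1 step4) (le_of_lt hnpos)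
    exact this
  -- pigeonhole count
  have hcount : (n : ℕ) * 2 ^ (f n * 2 ^ ((d + 1) * f n)) ≤ ⌈(n : ℝ) ^ c⌉₊ := by
    have := le_trans hreal (Nat.le_ceil ((n:ℝ) ^ c))
    exact_mod_cast this
  intro A
  have hcard : Fintype.card ((Fin (d + 1) → (Fin (f n) → Bool)) → (Fin (f n) → Bool))
      = 2 ^ (f n * 2 ^ ((d + 1) * f n)) := by
    simp only [Fintype.card_fun, Fintype.card_bool, Fintype.card_fin, ← pow_mul]
    ring_nf
  obtain ⟨y, hy⟩ := Fintype.exists_le_card_fiber_of_mul_le_card A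
    (by rw [hcard, Fintype.card_fin, mul_comm]; exact hcount)
  obtain ⟨S, hSsub, hScard⟩ := Finset.exists_subset_card_eq hy
  refine ⟨S, hScard, ?_, ?_⟩
  · intro i hi j hj
    have hi' : A i = y := by simpa using hSsub hi
    have hj' : A j = y := by simpa using hSsub hj
    rw [hi', hj']
  · intro V _ _ G _ hcardV hdeg id hinj hidS nb hnb s₀ t
    have hAeq : ∀ i ∈ S, ∀ j ∈ S, A i = A j := by
      intro i hi j hj
      have hi' : A i = y := by simpa using hSsub hi
      have hj' : A j = y := by simpa using hSsub hj
      rw [hi', hj']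
    rcases isEmpty_or_nonempty V with hV | hV
    · exact ⟨fun _ => true, fun v => (hV.false v).elim⟩
    · obtain ⟨v₀⟩ := hV
      induction t with
      | zero => exact ⟨s₀, fun v => rfl⟩
      | succ t ih =>
        obtain ⟨s, hs⟩ := ih
        refine ⟨A (id v₀) (Fin.cons s fun _ => s), fun v => ?_⟩
        rw [Function.iterate_succ_apply']
        simp only [hs]
        have hA : A (id v) = A (id v₀) := hAeq _ (hidS v) _ (hidS v₀)
        rw [hA]
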